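/- For every integer k ≥ 2, every oriented k-uniform hypergraph with Property O has at least k! edges (i.e., the lower bound f(k) ≥ k! holds). -/

import Mathlib

/-- An ordered `k`-set (`k`-tuple of distinct elements of `V`), given as an
embedding `Fin k ↪ V`, is *consistent* with a (strict) linear order `r` on `V`
if its entries are increasing with respect to `r`. -/
def Consistent {k : ℕ} {V : Type*} (r : V → V → Prop) (e : Fin k ↪ V) : Prop :=
  ∀ i j : Fin k, i < j → r (e i) (e j)

/-- An *oriented `k`-uniform hypergraph* on `V`: a family of `k`-tuples of
distinct elements of `V` (embeddings `Fin k ↪ V`) such that no two tuples have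
the same underlying `k`-element set. -/
structure OrientedHypergraph (k : ℕ) (V : Type*) where
  edges : Finset (Fin k ↪ V)
  eq_of_range_eq : ∀ e ∈ edges, ∀ f ∈ edges, Set.range ⇑e = Set.range ⇑f → e = f

/-- *Property O*: for every linear order (given by its strict order relation `r`)
on the vertex set, some edge is consistent with it. -/
def PropertyO {k : ℕ} {V : Type*} (H : OrientedHypergraph k V) : Prop :=
  ∀ r : V → V → Prop, IsStrictTotalOrder V r → ∃ e ∈ H.edges, Consistent r e

/-- A *`k`-tournament*: an oriented `k`-uniform hypergraph containing a tuple
for every `k`-element subset of the vertex set (such a tuple is unique by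
`eq_of_range_eq`). -/
def IsTournament {k : ℕ} {V : Type*} (H : OrientedHypergraph k V) : Prop :=
  ∀ S : Finset V, S.card = k → ∃ e ∈ H.edges, Set.range ⇑e = ↑S

section Aux

open Equiv Function

variable {V : Type*} [Fintype V] [DecidableEq V] {k n : ℕ}

/-- The key bijection: twisting by a permutation of `Fin k` via `e` gives a bijection
between `Perm (Fin k) × {φ // StrictMono (φ ∘ e)}` and all bijections `V ≃ Fin n`. -/
lemma aux_bij (e : Fin k ↪ V) :
    Function.Bijective
      (fun p : Perm (Fin k) × {φ : V ≃ Fin n // StrictMono (fun i => φ (e i))} =>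
        ((p.1.viaFintypeEmbedding e).trans p.2.1)) := by
  constructor
  · rintro ⟨σ, φ, hφ⟩ ⟨σ', φ', hφ'⟩ h
    simp only at h
    have hx : ∀ x : V, φ ((σ.viaFintypeEmbedding e) x) = φ' ((σ'.viaFintypeEmbedding e) x) :=
      fun x => congrArg (fun ψ : V ≃ Fin n => ψ x) h
    have hout : ∀ x : V, x ∉ Set.range ⇑e → φ x = φ' x := by
      intro x hxr
      have hh := hx x
      rwa [Equiv.Perm.viaFintypeEmbedding_apply_notMem_range _ _ hxr,
        Equiv.Perm.viaFintypeEmbedding_apply_notMem_range _ _ hxr] at hh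
    have hset : ⇑φ '' (Set.range ⇑e) = ⇑φ' '' (Set.range ⇑e) := by
      have h1 : ⇑φ '' (Set.range ⇑e)ᶜ = ⇑φ' '' (Set.range ⇑e)ᶜ :=
        Set.image_congr (fun x hx => hout x hx)
      have h2 := congrArg compl h1
      rwa [Equiv.image_compl, Equiv.image_compl, compl_compl, compl_compl] at h2
    have hrange : Set.range (fun i => φ (e i)) = Set.range (fun i => φ' (e i)) := by
      rw [show (fun i => φ (e i)) = ⇑φ ∘ ⇑e from rfl, show (fun i => φ' (e i)) = ⇑φ' ∘ ⇑e from rfl,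
        Set.range_comp, Set.range_comp, hset]
    haveI : WellFoundedLT (Fin k) := inferInstance
    have hfeq : (fun i => φ (e i)) = fun i => φ' (e i) := (hφ.range_inj hφ').1 hrange
    have hφφ' : φ = φ' := by
      apply Equiv.ext
      intro x
      by_cases hxr : x ∈ Set.range ⇑e
      · obtain ⟨i, rfl⟩ := hxr; exact congrFun hfeq i
      · exact hout x hxr
    subst hφφ'
    have hσ : σ = σ' := by
      apply Equiv.ext
      intro i
      have hh := hx (e i)
      rw [Equiv.Perm.viaFintypeEmbedding_apply_image, Equiv.Perm.viaFintypeEmbedding_apply_image]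
        at hh
      exact e.injective (φ.injective hh)
    simp [hσ]
  · intro ψ
    set g : Fin k → Fin n := fun i => ψ (e i) with hg
    have hginj : Function.Injective g := fun i j h => e.injective (ψ.injective h)
    set τ := Tuple.sort g with hτ
    have hmono : StrictMono (g ∘ ⇑τ) :=
      (Tuple.monotone_sort g).strictMono_of_injective (hginj.comp τ.injective)
    have hP : ∀ j, ((τ⁻¹ : Perm (Fin k)).viaFintypeEmbedding e).symm (e j) = e (τ j) := by
      intro j
      rw [Equiv.symm_apply_eq, Equiv.Perm.viaFintypeEmbedding_apply_image]
      simp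
    refine ⟨⟨τ⁻¹, ⟨((τ⁻¹ : Perm (Fin k)).viaFintypeEmbedding e).symm.trans ψ, ?_⟩⟩, ?_⟩
    · intro a b hab
      simp only [Equiv.trans_apply]
      rw [hP, hP]
      exact hmono hab
    · ext x
      simp [Equiv.trans_apply]

lemma card_mono (e : Fin k ↪ V) :
    k.factorial * Nat.card {φ : V ≃ Fin n // StrictMono (fun i => φ (e i))} =
      Nat.card (V ≃ Fin n) := by
  classical
  have h := Nat.card_eq_of_bijective _ (aux_bij (n := n) e)
  rw [Nat.card_prod] at h
  rw [← h]
  congr 1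
  rw [Nat.card_eq_fintype_card, Fintype.card_perm, Fintype.card_fin]

end Aux

/-- For every integer `k ≥ 2`, every oriented `k`-uniform hypergraph
with Property O has at least `k!` edges. -/
theorem lower_bound_propertyO {V : Type*} [Fintype V] (k : ℕ) (hk : 2 ≤ k)
    (H : OrientedHypergraph k V) (hO : PropertyO H) :
    k.factorial ≤ H.edges.card := by
  classical
  set n := Fintype.card V with hn
  have hr : ∀ φ : V ≃ Fin n, IsStrictTotalOrder V (fun x y => φ x < φ y) := by
    intro φ
    haveI : IsTrans V (fun x y => φ x < φ y) := ⟨fun _ _ _ h1 h2 => h1.trans h2⟩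
    haveI : IsIrrefl V (fun x y => φ x < φ y) := ⟨fun a => lt_irrefl (φ a)⟩
    haveI : IsTrichotomous V (fun x y => φ x < φ y) := ⟨?_⟩
    · haveI : IsStrictOrder V (fun x y => φ x < φ y) := { }
      exact { }
    intro a b
    rcases lt_trichotomy (φ a) (φ b) with h | h | h
    · exact fun h1 _ => absurd h h1
    · exact fun _ _ => φ.injective h
    · exact fun _ h2 => absurd h h2
  have hex : ∀ φ : V ≃ Fin n, ∃ e ∈ H.edges, Consistent (fun x y => φ x < φ y) e :=
    fun φ => hO _ (hr φ)
  choose f hf hcons using hex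
  -- for each edge `e`, the number of bijections making `e` increasing
  set M : (Fin k ↪ V) → ℕ :=
    fun e => Nat.card {φ : V ≃ Fin n // StrictMono (fun i => φ (e i))} with hM
  have hMcard : ∀ e : Fin k ↪ V, k.factorial * M e = Nat.card (V ≃ Fin n) :=
    fun e => card_mono e
  obtain ⟨φ0⟩ : Nonempty (V ≃ Fin n) := ⟨Fintype.equivFin V⟩
  set e0 := f φ0 with he0
  have hMeq : ∀ e : Fin k ↪ V, M e = M e0 := by
    intro e
    have := (hMcard e).trans (hMcard e0).symm
    exact Nat.eq_of_mul_eq_mul_left (Nat.factorial_pos k) this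
  -- the fiber bound
  have hfiber : ∀ e ∈ H.edges, ((Finset.univ : Finset (V ≃ Fin n)).filter
      (fun φ => f φ = e)).card ≤ M e0 := by
    intro e _
    rw [← hMeq e]
    have hsub : (Finset.univ : Finset (V ≃ Fin n)).filter (fun φ => f φ = e) ⊆
        (Finset.univ : Finset (V ≃ Fin n)).filter
          (fun φ => StrictMono (fun i => φ (e i))) := by
      intro φ hφ
      simp only [Finset.mem_filter, Finset.mem_univ, true_and] at hφ ⊢
      intro a b hab
      have := hcons φ a b hab
      rw [hφ] at this
      exact this
    calc ((Finset.univ : Finset (V ≃ Fin n)).filter (fun φ => f φ = e)).card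
        ≤ ((Finset.univ : Finset (V ≃ Fin n)).filter
            (fun φ => StrictMono (fun i => φ (e i)))).card := Finset.card_le_card hsub
      _ = M e := by
          simp only [M, Nat.card_eq_fintype_card, Fintype.card_subtype]
  have hcount : (Finset.univ : Finset (V ≃ Fin n)).card ≤ M e0 * H.edges.card :=
    Finset.card_le_mul_card_image_of_maps_to (fun φ _ => hf φ) (M e0) hfiber
  have hC : Nat.card (V ≃ Fin n) ≤ M e0 * H.edges.card := by
    rwa [Nat.card_eq_fintype_card, ← Finset.card_univ]
  have hMpos : 0 < M e0 := by
    rcases Nat.eq_zero_or_pos (M e0) with h | h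
    · exfalso
      have := hMcard e0
      rw [h, mul_zero] at this
      have : Nat.card (V ≃ Fin n) ≠ 0 := Nat.card_ne_zero.mpr ⟨⟨φ0⟩, inferInstance⟩
      omega
    · exact h
  have : k.factorial * M e0 ≤ M e0 * H.edges.card := (hMcard e0) ▸ hC
  rw [mul_comm (M e0) H.edges.card] at this
  exact Nat.le_of_mul_le_mul_right this hMpos
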